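/- Under the assumptions of Theorem 4 (W a rate supermartingale with horizon B, H-Lipschitz in the first coordinate, and α²HLMC√d < 1 with C = 2√(τ_max n)), and additionally with E[W_0(x_0)] ≤ (ε/(2αcε − α²M²))·plog(e‖x_0 − x*‖²/ε), the choice α = cεϑ/(M² + 2√ε·LMC√d) for ϑ ∈ (0,1] yields the failure-probability bound P(F_T) ≤ ((M² + 4√ε·LM√(τ_max n)·√d)/(c²εϑT))·plog(e‖x_0 − x*‖²/ε). -/

import Mathlib

/-- The piecewise logarithm. -/
noncomputable def plog (x : ℝ) : ℝ := if 1 ≤ x then Real.log (Real.exp 1 * x) else x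

/-- Corollary 7: failure-probability bound for lock-free SGD with the chosen
learning rate, obtained by algebraic substitution in the bound of Theorem 4. -/
theorem stmt_14 (d n : ℕ) (τmax : ℕ) (ε c L M ϑ T : ℝ) (α H C D p EW0 : ℝ)
    (hd : 0 < d) (hn : 0 < n) (hτ : 0 < τmax)
    (hε : 0 < ε) (hc : 0 < c) (hL : 0 < L) (hM : 0 < M) (hT : 0 < T)
    (hϑ0 : 0 < ϑ) (hϑ1 : ϑ ≤ 1)
    (hD : 0 ≤ D)  -- D stands for ‖x₀ - x*‖²
    (hC : C = 2 * Real.sqrt (τmax * n))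
    (hα : α = c * ε * ϑ / (M ^ 2 + 2 * Real.sqrt ε * L * M * C * Real.sqrt d))
    (hH : H = 2 * Real.sqrt ε * (2 * α * c * ε - α ^ 2 * M ^ 2)⁻¹)
    (hdenom : 0 < 2 * α * c * ε - α ^ 2 * M ^ 2)
    (hsmall : α ^ 2 * H * L * M * C * Real.sqrt d < 1)
    -- the initial value bound on the rate supermartingale
    (hEW0 : EW0 ≤ ε / (2 * α * c * ε - α ^ 2 * M ^ 2) * plog (Real.exp 1 * D / ε))
    -- the conclusion of Theorem 4: the failure probability p is bounded
    (hp : p ≤ EW0 / ((1 - α ^ 2 * H * L * M * C * Real.sqrt d) * T)) :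
    p ≤ (M ^ 2 + 4 * Real.sqrt ε * L * M * Real.sqrt (τmax * n) * Real.sqrt d)
        / (c ^ 2 * ε * ϑ * T) * plog (Real.exp 1 * D / ε) := by
  set pl := plog (Real.exp 1 * D / ε) with hpl_def
  have hsε : 0 < Real.sqrt ε := Real.sqrt_pos.mpr hε
  have hsd : 0 < Real.sqrt d := Real.sqrt_pos.mpr (by exact_mod_cast hd)
  have hCpos : 0 < C := by
    rw [hC]
    have : (0:ℝ) < (τmax : ℝ) * n := by positivity
    positivity
  have hSpos : 0 < M ^ 2 + 2 * Real.sqrt ε * L * M * C * Real.sqrt d := by positivity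
  have hαpos : 0 < α := by
    rw [hα]; positivity
  have hplpos : 0 ≤ pl := by
    rw [hpl_def, plog]
    split
    · apply Real.log_nonneg
      nlinarith [Real.exp_pos 1, Real.add_one_le_exp (1:ℝ)]
    · positivity
  have h1x : 0 < 1 - α ^ 2 * H * L * M * C * Real.sqrt d := by linarith
  have key : H * (2 * α * c * ε - α ^ 2 * M ^ 2) = 2 * Real.sqrt ε := by
    rw [hH, mul_assoc, inv_mul_cancel₀ hdenom.ne', mul_one]
  have hαS : α * (M ^ 2 + 2 * Real.sqrt ε * L * M * C * Real.sqrt d) = c * ε * ϑ := by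
    rw [hα]; field_simp
  have key2 : (1 - α ^ 2 * H * L * M * C * Real.sqrt d) * (2 * α * c * ε - α ^ 2 * M ^ 2)
      = α * c * ε * (2 - ϑ) := by
    linear_combination (-(α ^ 2 * L * M * C * Real.sqrt d)) * key - α * hαS
  -- middle bound
  have hmid : EW0 / ((1 - α ^ 2 * H * L * M * C * Real.sqrt d) * T)
      ≤ (M ^ 2 + 4 * Real.sqrt ε * L * M * Real.sqrt (τmax * n) * Real.sqrt d)
        / (c ^ 2 * ε * ϑ * T) * pl := by
    rw [div_le_iff₀ (by positivity)]
    have hEW0' : EW0 ≤ ε / (2 * α * c * ε - α ^ 2 * M ^ 2) * pl := hEW0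
    refine le_trans hEW0' ?_
    rw [div_mul_eq_mul_div, div_le_iff₀ hdenom]
    have hS4 : M ^ 2 + 4 * Real.sqrt ε * L * M * Real.sqrt (τmax * n) * Real.sqrt d
        = M ^ 2 + 2 * Real.sqrt ε * L * M * C * Real.sqrt d := by
      rw [hC]; ring
    rw [hS4, div_mul_eq_mul_div, div_mul_eq_mul_div, div_mul_eq_mul_div,
      le_div_iff₀ (by positivity)]
    have heq : (M ^ 2 + 2 * Real.sqrt ε * L * M * C * Real.sqrt d) * pl
        * ((1 - α ^ 2 * H * L * M * C * Real.sqrt d) * T) * (2 * α * c * ε - α ^ 2 * M ^ 2)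
        = pl * T * c ^ 2 * ε ^ 2 * ϑ * (2 - ϑ) := by
      linear_combination ((M ^ 2 + 2 * Real.sqrt ε * L * M * C * Real.sqrt d) * pl * T) * key2
        + (pl * T * c * ε * (2 - ϑ)) * hαS
    rw [heq]
    nlinarith [mul_nonneg (mul_nonneg (mul_nonneg hplpos hT.le)
      (by positivity : (0:ℝ) ≤ c ^ 2 * ε ^ 2 * ϑ)) (sub_nonneg.mpr hϑ1)]
  exact le_trans hp hmid
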